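/- Let H be a complex Hilbert space, M a von Neumann algebra on H, and ξ ∈ H. Let ε ∈ M be an orthogonal projection with εξ = ξ such that for every positive a ∈ M with ⟨aξ, ξ⟩ = 0 one has εaε = 0. Suppose that for every selfadjoint a ∈ M and every δ > 0 there exists b in the commutant M' with ‖aξ − bξ‖ < δ. Then εa = aε for every a ∈ M. -/

import Mathlib

theorem stmt_2 {H : Type*} [NormedAddCommGroup H] [InnerProductSpace ℂ H] [CompleteSpace H]
    (M : VonNeumannAlgebra H) (ξ : H)
    (e : H →L[ℂ] H) (he : e ∈ M) (heSA : IsSelfAdjoint e) (heIdem : e * e = e)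
    (heξ : e ξ = ξ)
    (hsupp : ∀ a : H →L[ℂ] H, a ∈ M → a.IsPositive →
      (inner ℂ (a ξ) ξ : ℂ) = 0 → e * a * e = 0)
    (happrox : ∀ a : H →L[ℂ] H, a ∈ M → IsSelfAdjoint a →
      ∀ δ : ℝ, 0 < δ → ∃ b ∈ M.commutant, ‖a ξ - b ξ‖ < δ) :
    ∀ a : H →L[ℂ] H, a ∈ M → e * a = a * e := by
  classical
  -- the evaluation-at-ξ linear map
  let ev : (H →L[ℂ] H) →ₗ[ℂ] H :=
    { toFun := fun b => b ξ
      map_add' := fun _ _ => rfl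
      map_smul' := fun _ _ => rfl }
  let W : Submodule ℂ H :=
    (Subalgebra.toSubmodule M.commutant.toStarSubalgebra.toSubalgebra).map ev
  let V : Submodule ℂ H := W.topologicalClosure
  have hWV : ∀ b ∈ M.commutant, b ξ ∈ W := fun b hb => Submodule.mem_map.2 ⟨b, hb, rfl⟩
  have hWVle : (W : Set H) ⊆ (V : Set H) := by
    intro x hx
    exact W.le_topologicalClosure hx
  have hVclosed : IsClosed (V : Set H) := W.isClosed_topologicalClosure
  have hVmem_closure : ∀ x : H, x ∈ closure (W : Set H) → x ∈ V := fun x hx => hx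
  have hVclosure : ∀ x : H, x ∈ V → x ∈ closure (W : Set H) := fun x hx => hx
  haveI : CompleteSpace V := hVclosed.completeSpace_coe
  have hξV : ξ ∈ V := hWVle (by simpa using hWV 1 (one_mem _))
  -- e acts as identity on V
  have heV : ∀ v ∈ V, e v = v := by
    intro v hv
    have hsub : closure (W : Set H) ⊆ {x | e x = x} := by
      apply closure_minimal _ (isClosed_eq e.continuous continuous_id)
      rintro x hx
      obtain ⟨b, hb, rfl⟩ := Submodule.mem_map.1 hx
      have hcomm : e * b = b * e := VonNeumannAlgebra.mem_commutant_iff.mp hb e he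
      show e (b ξ) = b ξ
      calc e (b ξ) = (e * b) ξ := rfl
        _ = (b * e) ξ := by rw [hcomm]
        _ = b ξ := by simp [ContinuousLinearMap.mul_apply, heξ]
    exact hsub (hVclosure v hv)
  -- V is invariant under the commutant
  have hbV : ∀ b ∈ M.commutant, ∀ v ∈ V, b v ∈ V := by
    intro b hb v hv
    have hsub : closure (W : Set H) ⊆ b ⁻¹' (V : Set H) := by
      apply closure_minimal _ (hVclosed.preimage b.continuous)
      rintro x hx
      obtain ⟨c, hc, rfl⟩ := Submodule.mem_map.1 hx
      show b (c ξ) ∈ V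
      have : b (c ξ) = (b * c) ξ := rfl
      rw [this]
      exact hWVle (hWV _ (mul_mem hb hc))
    exact hsub (hVclosure v hv)
  -- the orthogonal projection onto V
  let P : H →L[ℂ] H := V.subtypeL.comp (V.orthogonalProjectionOnto)
  have hPmem : ∀ v : H, P v ∈ V := fun v => (V.orthogonalProjectionOnto v).2
  have hPid : ∀ v ∈ V, P v = v := fun v hv => Submodule.starProjection_eq_self_iff.2 hv
  have hPorth : ∀ x : H, x - P x ∈ Vᗮ := fun x => Submodule.sub_starProjection_mem_orthogonal x
  have hPsa : IsSelfAdjoint P := isSelfAdjoint_starProjection V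
  -- P belongs to M
  have hPM : P ∈ M := by
    rw [← VonNeumannAlgebra.commutant_commutant M]
    rw [VonNeumannAlgebra.mem_commutant_iff]
    intro b hb
    have hbstar : star b ∈ M.commutant := star_mem hb
    have hborth : ∀ w ∈ Vᗮ, b w ∈ Vᗮ := by
      intro w hw
      rw [Submodule.mem_orthogonal']
      intro u hu
      have h1 : (inner ℂ (b w) u : ℂ) = inner ℂ w ((ContinuousLinearMap.adjoint b) u) := by
        rw [ContinuousLinearMap.adjoint_inner_right]
      have h2 : (ContinuousLinearMap.adjoint b) u = (star b) u := rfl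
      rw [h1, h2]
      exact (Submodule.mem_orthogonal' V w).1 hw _ (hbV _ hbstar u hu)
    ext η
    show b (P η) = P (b η)
    have hdecomp : b η = b (P η) + b (η - P η) := by
      rw [← map_add]; congr 1; abel
    have h1 : P (b (P η)) = b (P η) := hPid _ (hbV b hb _ (hPmem η))
    have h2 : P (b (η - P η)) = 0 := by
      have hmem : b (η - P η) ∈ Vᗮ := hborth _ (hPorth η)
      have : V.orthogonalProjectionOnto (b (η - P η)) = 0 :=
        Submodule.orthogonalProjectionOnto_apply_of_mem_orthogonal hmem
      show (V.subtypeL) (V.orthogonalProjectionOnto (b (η - P η))) = 0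
      rw [this]; rfl
    rw [hdecomp, map_add, h1, h2, add_zero]
  -- 1 - P is positive
  have hperp : ∀ x : H, (inner ℂ (x - P x) (P x) : ℂ) = 0 := fun x =>
    (Submodule.mem_orthogonal' V _).1 (hPorth x) _ (hPmem x)
  have hinner1P : ∀ x : H, (inner ℂ ((1 - P) x) x : ℂ) = (‖x - P x‖ ^ 2 : ℝ) := by
    intro x
    have h0 : (1 - P) x = x - P x := rfl
    rw [h0]
    have hx : (inner ℂ (x - P x) x : ℂ)
        = inner ℂ (x - P x) (x - P x) + inner ℂ (x - P x) (P x) := by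
      rw [← inner_add_right]
      congr 1
      abel
    rw [hx, hperp, add_zero, inner_self_eq_norm_sq_to_K]
    norm_cast
  have hpos : (1 - P).IsPositive := by
    refine ContinuousLinearMap.isPositive_def'.2 ⟨((IsSelfAdjoint.one (H →L[ℂ] H)).sub hPsa), fun x => ?_⟩
    rw [ContinuousLinearMap.reApplyInnerSelf_apply, hinner1P]
    simpa [← Complex.ofReal_pow, Complex.ofReal_re] using sq_nonneg ‖x - P x‖
  have h1PM : (1 - P) ∈ M := sub_mem (one_mem M) hPM
  have hinner0 : (inner ℂ ((1 - P) ξ) ξ : ℂ) = 0 := by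
    have : (1 - P) ξ = ξ - P ξ := rfl
    rw [this, hPid ξ hξV, sub_self, inner_zero_left]
  -- support condition: e P e = e, hence range of e ⊆ V
  have hsupp0 : e * (1 - P) * e = 0 := hsupp _ h1PM hpos hinner0
  have hePe : e * P * e = e := by
    have h := hsupp0
    rw [mul_sub, mul_one, sub_mul, heIdem, sub_eq_zero] at h
    exact h.symm
  have hadj : ContinuousLinearMap.adjoint e = e := ContinuousLinearMap.isSelfAdjoint_iff'.mp heSA
  have heran : ∀ η : H, e η ∈ V := by
    intro η
    set w := e η - P (e η) with hw
    have hwV : w ∈ Vᗮ := hPorth (e η)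
    have hinnerPe : (inner ℂ w (P (e η)) : ℂ) = 0 :=
      (Submodule.mem_orthogonal' V w).1 hwV _ (hPmem _)
    have hinnerE : (inner ℂ w (e η) : ℂ) = 0 := by
      have h1 : (inner ℂ w (e η) : ℂ) = inner ℂ (e w) η := by
        rw [← ContinuousLinearMap.adjoint_inner_right e, hadj]
      have h2 : e w = (e * (1 - P) * e) η := by
        show e w = e ((1 - P) (e η))
        congr 1
      rw [h1, h2, hsupp0]
      simp
    have hww : (inner ℂ w w : ℂ) = 0 := by
      have : (inner ℂ w w : ℂ) = inner ℂ w (e η) - inner ℂ w (P (e η)) := by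
        rw [← inner_sub_right]
      rw [this, hinnerE, hinnerPe, sub_zero]
    have hw0 : w = 0 := inner_self_eq_zero.mp hww
    have : e η = P (e η) := by
      have := sub_eq_zero.mp hw0
      exact this
    rw [this]
    exact hPmem _
  -- every a ∈ M sends ξ into V
  have hsc : ∀ a : H →L[ℂ] H, a ∈ M → IsSelfAdjoint a → a ξ ∈ V := by
    intro a ha hsa
    apply hVmem_closure
    rw [Metric.mem_closure_iff]
    intro δ hδ
    obtain ⟨b, hb, hlt⟩ := happrox a ha hsa δ hδ
    exact ⟨b ξ, hWV b hb, by rwa [dist_eq_norm]⟩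
  have haξ : ∀ a : H →L[ℂ] H, a ∈ M → a ξ ∈ V := by
    intro a ha
    have hI : Complex.I * (-Complex.I / 2) = 1 / 2 := by
      norm_num [Complex.ext_iff]
    set a₁ : H →L[ℂ] H := (1 / 2 : ℂ) • (a + star a) with ha₁
    set a₂ : H →L[ℂ] H := (-Complex.I / 2 : ℂ) • (a - star a) with ha₂
    have ha₁M : a₁ ∈ M := by
      show _ ∈ M.toStarSubalgebra
      exact SMulMemClass.smul_mem _ (add_mem ha (star_mem ha))
    have ha₂M : a₂ ∈ M := by
      show _ ∈ M.toStarSubalgebra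
      exact SMulMemClass.smul_mem _ (sub_mem ha (star_mem ha))
    have ha₁sa : IsSelfAdjoint a₁ := by
      show star a₁ = a₁
      rw [ha₁, star_smul, star_add, star_star]
      have : (starRingEnd ℂ) (1 / 2 : ℂ) = (1 / 2 : ℂ) := by rw [map_div₀, map_one, map_ofNat]
      rw [RCLike.star_def, this, add_comm]
    have ha₂sa : IsSelfAdjoint a₂ := by
      show star a₂ = a₂
      rw [ha₂, star_smul, star_sub, star_star]
      have : (starRingEnd ℂ) (-Complex.I / 2 : ℂ) = (Complex.I / 2 : ℂ) := by
        rw [map_div₀, map_neg, Complex.conj_I, neg_neg, map_ofNat]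
      rw [RCLike.star_def, this]
      module
    have hdecomp : a = a₁ + Complex.I • a₂ := by
      rw [ha₁, ha₂, smul_smul, hI]
      module
    have : a ξ = a₁ ξ + Complex.I • a₂ ξ := by rw [hdecomp]; rfl
    rw [this]
    exact add_mem (hsc a₁ ha₁M ha₁sa) (Submodule.smul_mem _ _ (hsc a₂ ha₂M ha₂sa))
  -- V is invariant under every a ∈ M
  have haV : ∀ a : H →L[ℂ] H, a ∈ M → ∀ v ∈ V, a v ∈ V := by
    intro a ha v hv
    have hsub : closure (W : Set H) ⊆ a ⁻¹' (V : Set H) := by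
      apply closure_minimal _ (hVclosed.preimage a.continuous)
      rintro x hx
      obtain ⟨b, hb, rfl⟩ := Submodule.mem_map.1 hx
      show a (b ξ) ∈ V
      have hcomm : a * b = b * a := VonNeumannAlgebra.mem_commutant_iff.mp hb a ha
      have : a (b ξ) = b (a ξ) := by
        calc a (b ξ) = (a * b) ξ := rfl
          _ = (b * a) ξ := by rw [hcomm]
          _ = b (a ξ) := rfl
      rw [this]
      exact hbV b hb _ (haξ a ha)
    exact hsub (hVclosure v hv)
  -- conclusion
  have key : ∀ c : H →L[ℂ] H, c ∈ M → e * c * e = c * e := by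
    intro c hc
    ext η
    show e (c (e η)) = c (e η)
    exact heV _ (haV c hc _ (heran η))
  intro a ha
  have h1 : e * a * e = a * e := key a ha
  have h2 : e * star a * e = star a * e := key _ (star_mem ha)
  have h3 : e * a * e = e * a := by
    calc e * a * e = star (e * star a * e) := by
          simp [star_mul, heSA.star_eq, mul_assoc]
      _ = star (star a * e) := by rw [h2]
      _ = e * a := by simp [star_mul, heSA.star_eq]
  rw [← h3]
  exact h1
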